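/- The function λ ↦ p_c(λ) for Poisson–Voronoi–Bernoulli percolation in the hyperbolic plane is continuous on (0,∞); more precisely, for all 0 < λ ≤ λ′, one has p_c(λ)·(λ/λ′) ≤ p_c(λ′) ≤ 1 − (1 − p_c(λ))·(λ/λ′). -/

import Mathlib

open Set

noncomputable section

/-- In `(p,λ)`-Poisson–Voronoi–Bernoulli percolation on the hyperbolic plane, white and
black nuclei are independent Poisson processes with intensities `λ_W = p·λ` and
`λ_B = (1−p)·λ`.  Here `θ λ_W λ_B` denotes the probability that a fixed point lies in an
unbounded white component; `(p,λ) ∈ 𝒲` iff this probability is positive.  The critical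
parameter `p_c(λ)` is the infimum of the `p ∈ [0,1]` for which white percolation occurs. -/
def pcVor (θ : ℝ → ℝ → ℝ) (lam : ℝ) : ℝ :=
  sInf {p : ℝ | p ∈ Icc (0 : ℝ) 1 ∧ 0 < θ (p * lam) ((1 - p) * lam)}

/-- the function `λ ↦ p_c(λ)` for Poisson–Voronoi–Bernoulli percolation in
the hyperbolic plane is continuous on `(0,∞)`; more precisely, for `0 < λ ≤ λ′`,
`p_c(λ)·(λ/λ′) ≤ p_c(λ′) ≤ 1 − (1 − p_c(λ))·(λ/λ′)`.

As permitted by the context, the Poisson-superposition monotonicity of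
`θ(λ_W, λ_B)` (nondecreasing in `λ_W`, nonincreasing in `λ_B`) is taken as given,
together with the (true in the model, e.g. `p = 1`) nondegeneracy that for every
intensity `λ > 0` some `p ∈ [0,1]` percolates. -/
theorem pcVor_sandwich_and_continuous
    (θ : ℝ → ℝ → ℝ)
    (hW : ∀ b : ℝ, Monotone fun a => θ a b)
    (hB : ∀ a : ℝ, Antitone fun b => θ a b)
    (hne : ∀ lam : ℝ, 0 < lam →
      ∃ p, p ∈ Icc (0 : ℝ) 1 ∧ 0 < θ (p * lam) ((1 - p) * lam)) :
    (∀ lam lam' : ℝ, 0 < lam → lam ≤ lam' →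
        pcVor θ lam * (lam / lam') ≤ pcVor θ lam' ∧
        pcVor θ lam' ≤ 1 - (1 - pcVor θ lam) * (lam / lam')) ∧
    ContinuousOn (pcVor θ) (Ioi (0 : ℝ)) := by
  have hbdd : ∀ lam : ℝ,
      BddBelow {p : ℝ | p ∈ Icc (0:ℝ) 1 ∧ 0 < θ (p * lam) ((1 - p) * lam)} :=
    fun lam => ⟨0, fun p hp => hp.1.1⟩
  have h0 : ∀ lam : ℝ, 0 < lam → 0 ≤ pcVor θ lam := by
    intro lam hlam
    obtain ⟨p, hp, hθ⟩ := hne lam hlam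
    exact le_csInf ⟨p, hp, hθ⟩ (fun q hq => hq.1.1)
  have h1 : ∀ lam : ℝ, 0 < lam → pcVor θ lam ≤ 1 := by
    intro lam hlam
    obtain ⟨p, hp, hθ⟩ := hne lam hlam
    exact le_trans (csInf_le (hbdd lam) ⟨hp, hθ⟩) hp.2
  have sandwich : ∀ lam lam' : ℝ, 0 < lam → lam ≤ lam' →
      pcVor θ lam * (lam / lam') ≤ pcVor θ lam' ∧
      pcVor θ lam' ≤ 1 - (1 - pcVor θ lam) * (lam / lam') := by
    intro a b ha hab
    have hb : (0:ℝ) < b := lt_of_lt_of_le ha hab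
    have hr0 : (0:ℝ) < a / b := div_pos ha hb
    have hr1 : a / b ≤ 1 := (div_le_one hb).2 hab
    have hinv : a / b * (b / a) = 1 := by field_simp
    constructor
    · -- lower bound
      obtain ⟨p₀, hp₀, hθ₀⟩ := hne b hb
      refine le_csInf ⟨p₀, hp₀, hθ₀⟩ ?_
      rintro p ⟨hp, hθ⟩
      by_cases hq : p * b ≤ a
      · -- q = p*b/a ∈ S(a)
        set q : ℝ := p * b / a with hqdef
        have hq0 : 0 ≤ q := div_nonneg (mul_nonneg hp.1 hb.le) ha.le
        have hq1 : q ≤ 1 := (div_le_one ha).2 hq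
        have hqa : q * a = p * b := by
          rw [hqdef, div_mul_cancel₀ _ ha.ne']
        have hmono : θ (p * b) ((1 - p) * b) ≤ θ (q * a) ((1 - q) * a) := by
          rw [hqa]
          apply hB (p * b)
          have h2 : (1 - q) * a = a - p * b := by rw [sub_mul, one_mul, hqa]
          rw [h2]
          nlinarith [hp.2]
        have hmem : q ∈ {p : ℝ | p ∈ Icc (0:ℝ) 1 ∧ 0 < θ (p * a) ((1 - p) * a)} :=
          ⟨⟨hq0, hq1⟩, lt_of_lt_of_le hθ hmono⟩
        have hle := csInf_le (hbdd a) hmem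
        have h3 : pcVor θ a * (a / b) ≤ q * (a / b) :=
          mul_le_mul_of_nonneg_right hle hr0.le
        have h4 : q * (a / b) = p := by
          rw [hqdef]; field_simp
        linarith
      · push_neg at hq
        have hpa : pcVor θ a ≤ 1 := h1 a ha
        have h5 : a / b < p := by
          rw [div_lt_iff₀ hb]; linarith
        nlinarith [h0 a ha]
    · -- upper bound
      obtain ⟨p₀, hp₀, hθ₀⟩ := hne a ha
      have key : ∀ p, p ∈ {p : ℝ | p ∈ Icc (0:ℝ) 1 ∧ 0 < θ (p * a) ((1 - p) * a)} →
          pcVor θ b ≤ 1 - (1 - p) * (a / b) := by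
        rintro p ⟨hp, hθ⟩
        set q : ℝ := 1 - (1 - p) * (a / b) with hqdef
        have h1p0 : 0 ≤ 1 - p := by linarith [hp.2]
        have h1p1 : 1 - p ≤ 1 := by linarith [hp.1]
        have hmul1 : (1 - p) * (a / b) ≤ 1 := by nlinarith
        have hmul0 : 0 ≤ (1 - p) * (a / b) := mul_nonneg h1p0 hr0.le
        have hq0 : 0 ≤ q := by rw [hqdef]; linarith
        have hq1 : q ≤ 1 := by rw [hqdef]; linarith
        have hqb : (1 - q) * b = (1 - p) * a := by
          rw [hqdef]; field_simp; ring
        have hmono : θ (p * a) ((1 - p) * a) ≤ θ (q * b) ((1 - q) * b) := by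
          rw [hqb]
          apply hW ((1 - p) * a)
          have h6 : q * b = b - (1 - p) * a := by
            rw [hqdef]; field_simp
          rw [h6]; nlinarith
        exact csInf_le (hbdd b) ⟨⟨hq0, hq1⟩, lt_of_lt_of_le hθ hmono⟩
      have hba : (0:ℝ) < b / a := div_pos hb ha
      have hlow : (pcVor θ b - 1) * (b / a) + 1 ≤ pcVor θ a := by
        refine le_csInf ⟨p₀, hp₀, hθ₀⟩ ?_
        intro p hp
        have h2 := key p hp
        have h4 : (pcVor θ b - 1) * (b / a) ≤ (-(1 - p) * (a / b)) * (b / a) :=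
          mul_le_mul_of_nonneg_right (by linarith) hba.le
        have h5 : (-(1 - p) * (a / b)) * (b / a) = -(1 - p) * (a / b * (b / a)) := by ring
        rw [h5, hinv] at h4
        linarith
      have h7 : ((pcVor θ b - 1) * (b / a) + 1) * (a / b) ≤ pcVor θ a * (a / b) :=
        mul_le_mul_of_nonneg_right hlow hr0.le
      have h8 : ((pcVor θ b - 1) * (b / a) + 1) * (a / b)
          = (pcVor θ b - 1) * (b / a * (a / b)) + a / b := by ring
      have hinv' : b / a * (a / b) = 1 := by field_simp
      rw [h8, hinv'] at h7
      nlinarith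
  refine ⟨sandwich, ?_⟩
  -- Lipschitz-type estimate: for 0 < a ≤ b, |pc b - pc a| ≤ (b - a)/a
  have hlip : ∀ a b : ℝ, 0 < a → a ≤ b → |pcVor θ b - pcVor θ a| ≤ (b - a) / a := by
    intro a b ha hab
    have hb : (0:ℝ) < b := lt_of_lt_of_le ha hab
    obtain ⟨hs1, hs2⟩ := sandwich a b ha hab
    have hpa0 := h0 a ha
    have hpa1 := h1 a ha
    have hr1 : a / b ≤ 1 := (div_le_one hb).2 hab
    have h1r : 1 - a / b ≤ (b - a) / a := by
      have e : 1 - a / b = (b - a) / b := by field_simp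
      rw [e]
      gcongr
    rw [abs_sub_le_iff]
    constructor
    · have h9 : pcVor θ b ≤ pcVor θ a * (a / b) + (1 - a / b) := by nlinarith
      nlinarith
    · have h10 : pcVor θ a - pcVor θ b ≤ pcVor θ a * (1 - a / b) := by nlinarith
      nlinarith
  -- continuity
  intro x hx
  rw [Metric.continuousWithinAt_iff]
  intro ε hε
  have hx0 : (0:ℝ) < x := hx
  refine ⟨min (x / 2) (ε * x / 4), by positivity, ?_⟩
  intro y hy hdy
  have hy0 : (0:ℝ) < y := hy
  have hdy1 : |y - x| < x / 2 := lt_of_lt_of_le (by rwa [Real.dist_eq] at hdy) (min_le_left _ _)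
  have hdy2 : |y - x| < ε * x / 4 := lt_of_lt_of_le (by rwa [Real.dist_eq] at hdy) (min_le_right _ _)
  have hyx : x / 2 < y := by
    cases' abs_lt.1 hdy1 with h1' h2'; linarith
  rw [Real.dist_eq]
  rcases le_total x y with h | h
  · have hl := hlip x y hx0 h
    have habs : |y - x| = y - x := abs_of_nonneg (by linarith)
    have hlt : (y - x) / x < ε := by
      rw [div_lt_iff₀ hx0]; nlinarith
    linarith
  · have hl := hlip y x hy0 h
    have habs : |y - x| = x - y := by rw [abs_sub_comm]; exact abs_of_nonneg (by linarith)
    have h2 : |pcVor θ y - pcVor θ x| ≤ (x - y) / y := by rwa [abs_sub_comm]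
    have hlt : (x - y) / y < ε := by
      rw [div_lt_iff₀ hy0]; nlinarith
    linarith
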